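/- Let H be a finite simple graph that is bipartite and has maximum degree at most 2, equipped with edge weights w taking values in ℕ, and suppose every edge of H connects two vertices of the same degree. Let S1 be the total weight of the edges both of whose endpoints have degree 1, and let S2 be the total weight of the edges both of whose endpoints have degree 2. Then there exists a matching M_H in H with 2·(total weight of M_H) ≥ 2·S1 + S2, i.e., weight(M_H) ≥ S1 + S2/2. -/

import Mathlib

open Finset

lemma fin2_eq_one {x : Fin 2} (h : x ≠ 0) : x = 1 := by fin_cases x <;> simp_all

lemma two_le_degree_of_two_edges {V : Type*} [Fintype V] [DecidableEq V]
    (G : SimpleGraph V) [DecidableRel G.Adj] {e f : Sym2 V} {x : V}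
    (he : e ∈ G.edgeSet) (hf : f ∈ G.edgeSet) (hne : e ≠ f)
    (hxe : x ∈ e) (hxf : x ∈ f) : 2 ≤ G.degree x := by
  obtain ⟨y, rfl⟩ := Sym2.mem_iff_exists.mp hxe
  obtain ⟨z, rfl⟩ := Sym2.mem_iff_exists.mp hxf
  have hy : y ∈ G.neighborFinset x := by simpa using he
  have hz : z ∈ G.neighborFinset x := by simpa using hf
  have hyz : y ≠ z := fun h => hne (by rw [h])
  calc 2 = ({y, z} : Finset V).card := by rw [card_insert_of_notMem (by simpa using hyz), card_singleton]
    _ ≤ (G.neighborFinset x).card := card_le_card (by intro a ha; simp at ha; rcases ha with rfl|rfl <;> assumption)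
    _ = G.degree x := G.card_neighborFinset_eq_degree x

section Main
variable {V : Type*} [Fintype V] [DecidableEq V]
    (G : SimpleGraph V) [DecidableRel G.Adj]

-- Hall condition for the degree-2 color-0 side
lemma hall_cond (hdeg : ∀ x : V, G.degree x ≤ 2) {A : Finset V}
    (hA2 : ∀ a ∈ A, G.degree a = 2)
    (s : Finset {v // v ∈ A}) :
    s.card ≤ (s.biUnion (fun a => G.neighborFinset a.1)).card := by
  set U := s.biUnion (fun a => G.neighborFinset a.1) with hU
  have key : 2 * s.card ≤ 2 * U.card := by
    calc 2 * s.card = ∑ a ∈ s, (G.neighborFinset a.1).card := by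
          rw [Finset.sum_congr rfl (fun a ha => by
            rw [G.card_neighborFinset_eq_degree, hA2 a.1 a.2])]
          simp [mul_comm]
      _ = ∑ a ∈ s, (U.filter (fun v => v ∈ G.neighborFinset a.1)).card := by
          refine Finset.sum_congr rfl (fun a ha => ?_)
          have hfe : U.filter (fun v => v ∈ G.neighborFinset a.1) = G.neighborFinset a.1 := by
            apply Finset.Subset.antisymm
            · exact fun v hv => (Finset.mem_filter.mp hv).2
            · intro v hv
              exact Finset.mem_filter.mpr ⟨Finset.mem_biUnion.mpr ⟨a, ha, hv⟩, hv⟩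
          rw [hfe]
      _ = ∑ v ∈ U, (s.filter (fun a => v ∈ G.neighborFinset a.1)).card := by
          simp only [Finset.card_filter]
          rw [Finset.sum_comm]
      _ ≤ ∑ v ∈ U, 2 := by
          refine Finset.sum_le_sum (fun v hv => ?_)
          have : (s.filter (fun a => v ∈ G.neighborFinset a.1)).card
              ≤ (G.neighborFinset v).card := by
            apply Finset.card_le_card_of_injOn (fun a => a.1)
            · intro a ha
              have := (Finset.mem_filter.mp ha).2
              simp only [SimpleGraph.mem_neighborFinset, Finset.mem_coe] at this ⊢
              exact this.symm
            · intro a _ b _ h; exact Subtype.ext h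
          calc _ ≤ (G.neighborFinset v).card := this
            _ = G.degree v := G.card_neighborFinset_eq_degree v
            _ ≤ 2 := hdeg v
      _ = 2 * U.card := by rw [Finset.sum_const, smul_eq_mul, mul_comm]
  omega

end Main

theorem matching_weight_bound {V : Type*} [Fintype V] [DecidableEq V]
    (G : SimpleGraph V) [DecidableRel G.Adj] (w : Sym2 V → ℕ)
    (hbip : G.Colorable 2)
    (hdeg : ∀ x : V, G.degree x ≤ 2)
    (hsame : ∀ e ∈ G.edgeSet, ∀ x ∈ e, ∀ y ∈ e, G.degree x = G.degree y) :
    ∃ M : Finset (Sym2 V), M ⊆ G.edgeFinset ∧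
      (∀ e ∈ M, ∀ f ∈ M, e ≠ f → ∀ x : V, ¬(x ∈ e ∧ x ∈ f)) ∧
      2 * ∑ e ∈ M, w e ≥
        2 * (∑ e ∈ G.edgeFinset.filter (fun e => ∀ x ∈ e, G.degree x = 1), w e) +
          ∑ e ∈ G.edgeFinset.filter (fun e => ∀ x ∈ e, G.degree x = 2), w e := by
  classical
  obtain ⟨c⟩ := hbip
  set D1 := G.edgeFinset.filter (fun e => ∀ x ∈ e, G.degree x = 1) with hD1def
  set E2 := G.edgeFinset.filter (fun e => ∀ x ∈ e, G.degree x = 2) with hE2def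
  set A : Finset V := univ.filter (fun v => G.degree v = 2 ∧ c v = 0) with hAdef
  set B : Finset V := univ.filter (fun v => G.degree v = 2 ∧ c v = 1) with hBdef
  have hA2 : ∀ a ∈ A, G.degree a = 2 := fun a ha => ((mem_filter.mp ha).2).1
  have hB2 : ∀ b ∈ B, G.degree b = 2 := fun b hb => ((mem_filter.mp hb).2).1
  have hAc : ∀ a ∈ A, c a = 0 := fun a ha => ((mem_filter.mp ha).2).2
  have hBc : ∀ b ∈ B, c b = 1 := fun b hb => ((mem_filter.mp hb).2).2
  have hABne : ∀ a ∈ A, ∀ b ∈ B, a ≠ b := by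
    intro a ha b hb h; subst h
    exact absurd ((hAc a ha).symm.trans (hBc a hb)) (by decide)
  -- incident E2-edges of a degree-2 vertex are exactly the incident edges
  have hincE2 : ∀ v, G.degree v = 2 → ∀ e, e ∈ G.incidenceFinset v ↔ (e ∈ E2 ∧ v ∈ e) := by
    intro v hv e
    rw [SimpleGraph.mem_incidenceFinset]
    constructor
    · rintro ⟨hes, hve⟩
      refine ⟨mem_filter.mpr ⟨SimpleGraph.mem_edgeFinset.mpr hes, ?_⟩, hve⟩
      intro x hx
      rw [hsame e hes x hx v hve, hv]
    · rintro ⟨he2, hve⟩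
      exact ⟨SimpleGraph.mem_edgeFinset.mp (mem_filter.mp he2).1, hve⟩
  -- an E2 edge between x and y
  have hE2mem : ∀ e ∈ E2, e ∈ G.edgeSet ∧ ∀ x ∈ e, G.degree x = 2 := by
    intro e he
    obtain ⟨h1, h2⟩ := mem_filter.mp he
    exact ⟨SimpleGraph.mem_edgeFinset.mp h1, h2⟩
  -- E2 is the disjoint union of incidence sets over A (and over B)
  have hcount : ∀ S : Finset V, (∀ v ∈ S, G.degree v = 2) →
      (∀ e ∈ E2, ∃! v, v ∈ S ∧ v ∈ e) → E2.card = 2 * S.card := by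
    intro S hS2 hcover
    have hdisj : (S : Set V).PairwiseDisjoint (fun v => G.incidenceFinset v) := by
      intro a ha b hb hab
      simp only [Finset.disjoint_left]
      intro e hea heb
      obtain ⟨he2, hae⟩ := (hincE2 a (hS2 a ha) e).mp hea
      obtain ⟨_, hbe⟩ := (hincE2 b (hS2 b hb) e).mp heb
      obtain ⟨v, _, huniq⟩ := hcover e he2
      exact hab ((huniq a ⟨ha, hae⟩).trans (huniq b ⟨hb, hbe⟩).symm)
    have hbu : E2 = S.biUnion (fun v => G.incidenceFinset v) := by
      apply Finset.Subset.antisymm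
      · intro e he
        obtain ⟨v, ⟨hvS, hve⟩, _⟩ := hcover e he
        exact mem_biUnion.mpr ⟨v, hvS, (hincE2 v (hS2 v hvS) e).mpr ⟨he, hve⟩⟩
      · intro e he
        obtain ⟨v, hvS, hvinc⟩ := mem_biUnion.mp he
        exact ((hincE2 v (hS2 v hvS) e).mp hvinc).1
    rw [hbu, card_biUnion (fun a ha b hb hab => hdisj ha hb hab)]
    rw [Finset.sum_congr rfl (fun v hv => by
      rw [G.card_incidenceFinset_eq_degree, hS2 v hv])]
    simp [mul_comm]
  -- every E2 edge has exactly one endpoint in A, one in B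
  have hExact : ∀ e ∈ E2, (∃! v, v ∈ A ∧ v ∈ e) ∧ (∃! v, v ∈ B ∧ v ∈ e) := by
    intro e he
    obtain ⟨hes, hd2⟩ := hE2mem e he
    induction e with
    | _ x y =>
      have hadj : G.Adj x y := hes
      have hcne : c x ≠ c y := c.valid hadj
      have hdx : G.degree x = 2 := hd2 x (by simp)
      have hdy : G.degree y = 2 := hd2 y (by simp)
      have hxy : x ≠ y := hadj.ne
      rcases eq_or_ne (c x) 0 with h0 | h0
      · have hy1 : c y = 1 := fin2_eq_one (fun h => hcne (h0.trans h.symm))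
        have hxA : x ∈ A := mem_filter.mpr ⟨mem_univ x, hdx, h0⟩
        have hyB : y ∈ B := mem_filter.mpr ⟨mem_univ y, hdy, hy1⟩
        constructor
        · refine ⟨x, ⟨hxA, by simp⟩, ?_⟩
          rintro v ⟨hvA, hve⟩
          simp only [Sym2.mem_iff] at hve
          rcases hve with rfl | rfl
          · rfl
          · exact absurd (hAc v hvA) (by rw [hy1]; simp)
        · refine ⟨y, ⟨hyB, by simp⟩, ?_⟩
          rintro v ⟨hvB, hve⟩
          simp only [Sym2.mem_iff] at hve
          rcases hve with rfl | rfl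
          · exact absurd (hBc v hvB) (by rw [h0]; simp)
          · rfl
      · have hx1 : c x = 1 := fin2_eq_one h0
        have hy0 : c y = 0 := by
          by_contra h
          exact hcne (hx1.trans (fin2_eq_one h).symm)
        have hyA : y ∈ A := mem_filter.mpr ⟨mem_univ y, hdy, hy0⟩
        have hxB : x ∈ B := mem_filter.mpr ⟨mem_univ x, hdx, hx1⟩
        constructor
        · refine ⟨y, ⟨hyA, by simp⟩, ?_⟩
          rintro v ⟨hvA, hve⟩
          simp only [Sym2.mem_iff] at hve
          rcases hve with rfl | rfl
          · exact absurd (hAc v hvA) (by rw [hx1]; simp)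
          · rfl
        · refine ⟨x, ⟨hxB, by simp⟩, ?_⟩
          rintro v ⟨hvB, hve⟩
          simp only [Sym2.mem_iff] at hve
          rcases hve with rfl | rfl
          · rfl
          · exact absurd (hBc v hvB) (by rw [hy0]; simp)
  have hcardA : E2.card = 2 * A.card := hcount A hA2 (fun e he => (hExact e he).1)
  have hcardB : E2.card = 2 * B.card := hcount B hB2 (fun e he => (hExact e he).2)
  have hAB : A.card = B.card := by omega
  -- Hall
  obtain ⟨f, hfinj, hfmem⟩ := (Finset.all_card_le_biUnion_card_iff_exists_injective
    (fun a : {v // v ∈ A} => G.neighborFinset a.1)).mp (hall_cond G hdeg hA2)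
  have hfadj : ∀ a : {v // v ∈ A}, G.Adj a.1 (f a) := by
    intro a; exact (SimpleGraph.mem_neighborFinset _ _ _).mp (hfmem a)
  have hfB : ∀ a : {v // v ∈ A}, f a ∈ B := by
    intro a
    have hadj := hfadj a
    have hd : G.degree (f a) = 2 := by
      rw [hsame s(a.1, f a) hadj (f a) (by simp) a.1 (by simp), hA2 a.1 a.2]
    have hc : c (f a) = 1 := by
      apply fin2_eq_one
      intro h
      exact c.valid hadj (by rw [h, hAc a.1 a.2])
    exact mem_filter.mpr ⟨mem_univ _, hd, hc⟩
  -- the matching M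
  set M : Finset (Sym2 V) := A.attach.image (fun a => s(a.1, f a)) with hMdef
  have hME2 : M ⊆ E2 := by
    intro e he
    obtain ⟨a, _, rfl⟩ := mem_image.mp he
    refine mem_filter.mpr ⟨SimpleGraph.mem_edgeFinset.mpr (hfadj a), ?_⟩
    intro x hx
    simp only [Sym2.mem_iff] at hx
    rcases hx with rfl | rfl
    · exact hA2 a.1 a.2
    · exact hB2 _ (hfB a)
  -- M is a matching
  have hMmatch : ∀ e ∈ M, ∀ g ∈ M, e ≠ g → ∀ x : V, ¬(x ∈ e ∧ x ∈ g) := by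
    intro e he g hg hne x ⟨hxe, hxg⟩
    obtain ⟨a, _, rfl⟩ := mem_image.mp he
    obtain ⟨b, _, rfl⟩ := mem_image.mp hg
    simp only [Sym2.mem_iff] at hxe hxg
    have hab : a ≠ b := fun h => hne (by rw [h])
    rcases hxe with h1 | h1 <;> rcases hxg with h2 | h2
    · exact hab (Subtype.ext (h1.symm.trans h2))
    · exact hABne a.1 a.2 (f b) (hfB b) (h1.symm.trans h2)
    · exact hABne b.1 b.2 (f a) (hfB a) (h2.symm.trans h1)
    · exact hab (hfinj (h1.symm.trans h2))
  -- f is surjective onto B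
  have himg : A.attach.image f = B := by
    apply Finset.eq_of_subset_of_card_le
    · intro v hv
      obtain ⟨a, _, rfl⟩ := mem_image.mp hv
      exact hfB a
    · rw [Finset.card_image_of_injective _ hfinj, Finset.card_attach, hAB]
  -- M' := E2 \ M is also a matching
  set M' : Finset (Sym2 V) := E2 \ M with hM'def
  have hM'match : ∀ e ∈ M', ∀ g ∈ M', e ≠ g → ∀ x : V, ¬(x ∈ e ∧ x ∈ g) := by
    intro e he g hg hne x ⟨hxe, hxg⟩
    obtain ⟨heE2, heM⟩ := mem_sdiff.mp he
    obtain ⟨hgE2, hgM⟩ := mem_sdiff.mp hg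
    have hdx : G.degree x = 2 := (hE2mem e heE2).2 x hxe
    -- get the M-edge through x
    have hMedge : ∃ m ∈ M, x ∈ m := by
      rcases eq_or_ne (c x) 0 with h0 | h0
      · have hxA : x ∈ A := mem_filter.mpr ⟨mem_univ x, hdx, h0⟩
        exact ⟨s(x, f ⟨x, hxA⟩), mem_image.mpr ⟨⟨x, hxA⟩, mem_attach _ _, rfl⟩, by simp⟩
      · have hx1 : c x = 1 := fin2_eq_one h0
        have hxB : x ∈ B := mem_filter.mpr ⟨mem_univ x, hdx, hx1⟩
        obtain ⟨a, ha, hfa⟩ := mem_image.mp (himg ▸ hxB)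
        exact ⟨s(a.1, f a), mem_image.mpr ⟨a, ha, rfl⟩, by rw [hfa]; simp⟩
    obtain ⟨m, hmM, hxm⟩ := hMedge
    -- incidence finset of x has card 2 and contains e, g, m
    have hinc_e : e ∈ G.incidenceFinset x := (hincE2 x hdx e).mpr ⟨heE2, hxe⟩
    have hinc_g : g ∈ G.incidenceFinset x := (hincE2 x hdx g).mpr ⟨hgE2, hxg⟩
    have hinc_m : m ∈ G.incidenceFinset x := (hincE2 x hdx m).mpr ⟨hME2 hmM, hxm⟩
    have hsub : ({e, g} : Finset (Sym2 V)) ⊆ G.incidenceFinset x := by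
      intro z hz; simp only [mem_insert, mem_singleton] at hz
      rcases hz with rfl | rfl <;> assumption
    have hcard2 : ({e, g} : Finset (Sym2 V)).card = 2 := by
      rw [card_insert_of_notMem (by simpa using hne), card_singleton]
    have heq : ({e, g} : Finset (Sym2 V)) = G.incidenceFinset x := by
      apply Finset.eq_of_subset_of_card_le hsub
      rw [G.card_incidenceFinset_eq_degree, hdx, hcard2]
    have : m ∈ ({e, g} : Finset (Sym2 V)) := heq ▸ hinc_m
    simp only [mem_insert, mem_singleton] at this
    rcases this with rfl | rfl
    · exact heM hmM
    · exact hgM hmM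
  -- D1 is a matching, disjoint from everything degree 2
  have hD1mem : ∀ e ∈ D1, e ∈ G.edgeSet ∧ ∀ x ∈ e, G.degree x = 1 := by
    intro e he
    obtain ⟨h1, h2⟩ := mem_filter.mp he
    exact ⟨SimpleGraph.mem_edgeFinset.mp h1, h2⟩
  -- sum identity
  have hsumsplit : ∑ e ∈ M', w e + ∑ e ∈ M, w e = ∑ e ∈ E2, w e :=
    Finset.sum_sdiff hME2
  -- choose the better of M, M'
  obtain ⟨K, hKE2, hKmatch, hKw⟩ :
      ∃ K : Finset (Sym2 V), K ⊆ E2 ∧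
        (∀ e ∈ K, ∀ g ∈ K, e ≠ g → ∀ x : V, ¬(x ∈ e ∧ x ∈ g)) ∧
        2 * ∑ e ∈ K, w e ≥ ∑ e ∈ E2, w e := by
    rcases le_total (∑ e ∈ M, w e) (∑ e ∈ M', w e) with h | h
    · exact ⟨M', sdiff_subset, hM'match, by omega⟩
    · exact ⟨M, hME2, hMmatch, by omega⟩
  -- final answer
  refine ⟨D1 ∪ K, ?_, ?_, ?_⟩
  · intro e he
    rcases mem_union.mp he with h | h
    · exact (mem_filter.mp h).1
    · exact (mem_filter.mp (hKE2 h)).1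
  · intro e he g hg hne x ⟨hxe, hxg⟩
    rcases mem_union.mp he with he1 | he2 <;> rcases mem_union.mp hg with hg1 | hg2
    · -- both D1: degree x = 1 but two edges
      have := two_le_degree_of_two_edges G (hD1mem e he1).1 (hD1mem g hg1).1 hne hxe hxg
      have h1 := (hD1mem e he1).2 x hxe
      omega
    · have h1 := (hD1mem e he1).2 x hxe
      have h2 := (hE2mem g (hKE2 hg2)).2 x hxg
      omega
    · have h1 := (hD1mem g hg1).2 x hxg
      have h2 := (hE2mem e (hKE2 he2)).2 x hxe
      omega
    · exact hKmatch e he2 g hg2 hne x ⟨hxe, hxg⟩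
  · have hdisj : Disjoint D1 K := by
      rw [Finset.disjoint_left]
      intro e he1 he2
      have hx : e.out.1 ∈ e := Sym2.out_fst_mem e
      have h1 := (hD1mem e he1).2 _ hx
      have h2 := (hE2mem e (hKE2 he2)).2 _ hx
      omega
    rw [Finset.sum_union hdisj]
    omega
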